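/- Let Λ be a finite index set, d ≥ 1, and let B i j ∈ M_d(ℂ) satisfy Σ_{i∈Λ} (B i j)ᴴ (B i j) = 1 for every j ∈ Λ. Let ρ = (ρ_j)_{j∈Λ} be a block state, M the OQRW map, ρ^{(m)} := M^m(ρ), and Λ(ρ^{(m)}) := { i ∈ Λ : ρ^{(m)}_i ≠ 0 }. Then for every n ≥ 0, every j ∈ Λ(ρ^{(n)}) and every k ≥ 1: Σ_{i_1 ∈ Λ(ρ^{(n+1)})} ⋯ Σ_{i_k ∈ Λ(ρ^{(n+k)})} Tr( ρ^{(n)}_j · (B_π)ᴴ B_π ) = Tr(ρ^{(n)}_j), where π = (j, i_1, …, i_k); that is, restricting the path sum to the supports of the evolved states does not change the total trace. (Paper's Lemma 4.3(iii): Tr(ρ^{(n)}_j b̄(n,j)) = Tr(ρ^{(n)}_j), at each finite depth k.) -/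

import Mathlib

open Matrix
open scoped Classical ComplexOrder

lemma posSemidef_iff_eq_transpose_mul_self {d : ℕ} {A : Matrix (Fin d) (Fin d) ℂ} :
    A.PosSemidef ↔ ∃ B : Matrix (Fin d) (Fin d) ℂ, A = Bᴴ * B := by
  open scoped MatrixOrder in
  constructor
  · intro hA
    obtain ⟨X, hX, -, hXA⟩ :=
      CFC.exists_sqrt_of_isSelfAdjoint_of_quasispectrumRestricts hA.isHermitian
        (QuasispectrumRestricts.nnreal_of_nonneg hA.nonneg)
    refine ⟨X, ?_⟩
    rw [show Xᴴ = X from hX]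
    simpa using hXA.symm
  · rintro ⟨B, rfl⟩
    exact posSemidef_conjTranspose_mul_self B

lemma psd_trace_nonneg {d : ℕ} {A : Matrix (Fin d) (Fin d) ℂ} (hA : A.PosSemidef) :
    0 ≤ A.trace := by
  obtain ⟨C, rfl⟩ := posSemidef_iff_eq_transpose_mul_self.mp hA
  rw [Matrix.trace]
  refine Finset.sum_nonneg fun i _ => ?_
  simp only [Matrix.diag_apply, Matrix.mul_apply, Matrix.conjTranspose_apply]
  exact Finset.sum_nonneg fun k _ => star_mul_self_nonneg _

lemma psd_trace_zero {d : ℕ} {A : Matrix (Fin d) (Fin d) ℂ} (hA : A.PosSemidef)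
    (h : A.trace = 0) : A = 0 := by
  obtain ⟨C, rfl⟩ := posSemidef_iff_eq_transpose_mul_self.mp hA
  have hC : C = 0 := by
    ext k i
    have h1 : ∑ i : Fin d, ∑ k : Fin d, star (C k i) * C k i = 0 := by
      simpa [Matrix.trace, Matrix.diag_apply, Matrix.mul_apply,
        Matrix.conjTranspose_apply] using h
    have h2 : ∀ i ∈ (Finset.univ : Finset (Fin d)),
        (0:ℂ) ≤ ∑ k : Fin d, star (C k i) * C k i :=
      fun i _ => Finset.sum_nonneg fun k _ => star_mul_self_nonneg _
    have h3 := (Finset.sum_eq_zero_iff_of_nonneg h2).mp h1 i (Finset.mem_univ i)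
    have h4 := (Finset.sum_eq_zero_iff_of_nonneg
      (fun k _ => star_mul_self_nonneg (C k i))).mp h3 k (Finset.mem_univ k)
    have := mul_eq_zero.mp h4
    simp only [star_eq_zero] at this
    simpa using this.elim id id
  rw [hC]; simp

/-- The path operator `B_π = B i_l i_{l-1} ⋯ B i_1 i_0` for a path
`π = (i_0, i_1, …, i_l)` in `Λ`. -/
noncomputable def pathOp {Λ : Type*} {d : ℕ} (B : Λ → Λ → Matrix (Fin d) (Fin d) ℂ)
    {l : ℕ} (π : Fin (l + 1) → Λ) : Matrix (Fin d) (Fin d) ℂ :=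
  ((List.ofFn (fun k : Fin l => B (π k.succ) (π k.castSucc))).reverse).prod

lemma pathOp_cons {Λ : Type*} {d : ℕ} (B : Λ → Λ → Matrix (Fin d) (Fin d) ℂ)
    {l : ℕ} (a : Λ) (π : Fin (l + 1) → Λ) :
    pathOp B (Fin.cons a π) = pathOp B π * B (π 0) a := by
  have h0 : (List.ofFn fun k : Fin (l+1) =>
      B ((Fin.cons a π : Fin (l+2) → Λ) k.succ) ((Fin.cons a π : Fin (l+2) → Λ) k.castSucc))
      = B (π 0) a :: List.ofFn (fun t : Fin l => B (π t.succ) (π t.castSucc)) := by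
    rw [List.ofFn_succ]
    simp [← Fin.succ_castSucc, Fin.cons_succ]
  unfold pathOp
  rw [h0, List.reverse_cons, List.prod_append, List.prod_singleton]

lemma psd_sum {d : ℕ} {α : Type*} (s : Finset α) (f : α → Matrix (Fin d) (Fin d) ℂ)
    (h : ∀ i ∈ s, (f i).PosSemidef) : (∑ i ∈ s, f i).PosSemidef :=
  Finset.sum_induction f _ (fun _ _ ha hb => ha.add hb) Matrix.PosSemidef.zero h

section Main
variable {Λ : Type*} [Fintype Λ] {d : ℕ}
variable (B : Λ → Λ → Matrix (Fin d) (Fin d) ℂ)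
variable (ρ : Λ → Matrix (Fin d) (Fin d) ℂ)
variable (M : (Λ → Matrix (Fin d) (Fin d) ℂ) → Λ → Matrix (Fin d) (Fin d) ℂ)

lemma iter_psd (hρ : ∀ j, (ρ j).PosSemidef)
    (hM : ∀ σ i, M σ i = ∑ j : Λ, B i j * σ j * (B i j)ᴴ) :
    ∀ m j, ((M^[m] ρ) j).PosSemidef := by
  intro m
  induction m with
  | zero => simpa using hρ
  | succ m ih =>
    intro j
    rw [Function.iterate_succ_apply', hM]
    exact psd_sum _ _ fun j' _ => (ih j').mul_mul_conjTranspose_same _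

lemma iter_zero (hρ : ∀ j, (ρ j).PosSemidef)
    (hM : ∀ σ i, M σ i = ∑ j : Λ, B i j * σ j * (B i j)ᴴ) :
    ∀ m x, (M^[m+1] ρ) x = 0 → ∀ j, B x j * (M^[m] ρ) j * (B x j)ᴴ = 0 := by
  intro m x hx j
  have h0 : ∑ j' : Λ, B x j' * (M^[m] ρ) j' * (B x j')ᴴ = 0 := by
    have := Function.iterate_succ_apply' M m ρ
    rw [← hM]
    calc M (M^[m] ρ) x = (M^[m+1] ρ) x := by rw [Function.iterate_succ_apply']
    _ = 0 := hx
  have hpsd : ∀ j' ∈ (Finset.univ : Finset Λ),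
      (0:ℂ) ≤ (B x j' * (M^[m] ρ) j' * (B x j')ᴴ).trace :=
    fun j' _ => psd_trace_nonneg ((iter_psd B ρ M hρ hM m j').mul_mul_conjTranspose_same _)
  have htr : ∑ j' : Λ, (B x j' * (M^[m] ρ) j' * (B x j')ᴴ).trace = 0 := by
    rw [← Matrix.trace_sum, h0, Matrix.trace_zero]
  have := (Finset.sum_eq_zero_iff_of_nonneg hpsd).mp htr j (Finset.mem_univ j)
  exact psd_trace_zero ((iter_psd B ρ M hρ hM m j).mul_mul_conjTranspose_same _) this

lemma main_lemma (hB : ∀ j : Λ, ∑ i : Λ, (B i j)ᴴ * B i j = 1)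
    (hρ : ∀ j, (ρ j).PosSemidef)
    (hM : ∀ σ i, M σ i = ∑ j : Λ, B i j * σ j * (B i j)ᴴ) :
    ∀ (k m : ℕ) (j : Λ) (A : Matrix (Fin d) (Fin d) ℂ), A.PosSemidef →
      ((M^[m] ρ) j - A).PosSemidef →
      ∑ i ∈ Finset.univ.filter
          (fun i : Fin k → Λ => ∀ t : Fin k, (M^[m + t.1 + 1] ρ) (i t) ≠ 0),
        (A * ((pathOp B (Fin.cons j i))ᴴ * pathOp B (Fin.cons j i))).trace
      = A.trace := by
  intro k
  induction k with
  | zero =>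
    intro m j A hA hle
    rw [Finset.filter_true_of_mem (fun i _ => fun t => t.elim0)]
    rw [Fintype.sum_unique]
    simp [pathOp]
  | succ k ih =>
    intro m j A hA hle
    -- vanishing of off-support conjugations
    have key : ∀ x : Λ, (M^[m+1] ρ) x = 0 → B x j * A * (B x j)ᴴ = 0 := by
      intro x hx
      have h1 : B x j * ((M^[m] ρ) j) * (B x j)ᴴ = 0 := iter_zero B ρ M hρ hM m x hx j
      have hsum : B x j * A * (B x j)ᴴ + B x j * ((M^[m] ρ) j - A) * (B x j)ᴴ = 0 := by
        rw [← h1]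
        simp only [Matrix.mul_sub, Matrix.sub_mul]
        abel
      have hA1 := hA.mul_mul_conjTranspose_same (B x j)
      have hA2 := hle.mul_mul_conjTranspose_same (B x j)
      have htr : (B x j * A * (B x j)ᴴ).trace + (B x j * ((M^[m] ρ) j - A) * (B x j)ᴴ).trace = 0 := by
        rw [← Matrix.trace_add, hsum, Matrix.trace_zero]
      have h2 : (B x j * A * (B x j)ᴴ).trace = 0 := by
        have n1 := psd_trace_nonneg hA1
        have n2 := psd_trace_nonneg hA2
        have he : (B x j * A * (B x j)ᴴ).trace
            = -(B x j * ((M^[m] ρ) j - A) * (B x j)ᴴ).trace :=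
          eq_neg_of_add_eq_zero_left htr
        exact le_antisymm (he ▸ neg_nonpos_of_nonneg n2) n1
      exact psd_trace_zero hA1 h2
    -- domination at the next level
    have hle' : ∀ x : Λ, ((M^[m+1] ρ) x - B x j * A * (B x j)ᴴ).PosSemidef := by
      intro x
      have hstep : (M^[m+1] ρ) x = ∑ j' : Λ, B x j' * (M^[m] ρ) j' * (B x j')ᴴ := by
        rw [Function.iterate_succ_apply', hM]
      rw [hstep]
      have hsplit : ∑ j' : Λ, B x j' * (M^[m] ρ) j' * (B x j')ᴴ - B x j * A * (B x j)ᴴ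
          = (B x j * ((M^[m] ρ) j - A) * (B x j)ᴴ)
            + ∑ j' ∈ Finset.univ.erase j, B x j' * (M^[m] ρ) j' * (B x j')ᴴ := by
        rw [← Finset.add_sum_erase _ _ (Finset.mem_univ j)]
        simp only [Matrix.mul_sub, Matrix.sub_mul]
        abel
      rw [hsplit]
      exact (hle.mul_mul_conjTranspose_same _).add
        (psd_sum _ _ fun j' _ => (iter_psd B ρ M hρ hM m j').mul_mul_conjTranspose_same _)
    -- trace transport along one step
    have htrans : ∀ (x : Λ) (i' : Fin k → Λ),
        (A * ((pathOp B (Fin.cons j (Fin.cons x i')))ᴴ * pathOp B (Fin.cons j (Fin.cons x i')))).trace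
        = ((B x j * A * (B x j)ᴴ) *
            ((pathOp B (Fin.cons x i'))ᴴ * pathOp B (Fin.cons x i'))).trace := by
      intro x i'
      rw [pathOp_cons]
      simp only [Fin.cons_zero]
      set Q := pathOp B (Fin.cons x i') with hQ
      rw [Matrix.conjTranspose_mul]
      have e1 : A * ((B x j)ᴴ * Qᴴ * (Q * B x j)) = (A * (B x j)ᴴ * Qᴴ * Q) * B x j := by
        noncomm_ring
      rw [e1, Matrix.trace_mul_comm]
      congr 1
      noncomm_ring
    -- now rewrite the sum
    have hcond : ∀ (x : Λ) (i' : Fin k → Λ),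
        (∀ t : Fin (k+1), (M^[m + t.1 + 1] ρ) ((Fin.cons x i' : Fin (k+1) → Λ) t) ≠ 0)
        ↔ ((M^[m+1] ρ) x ≠ 0 ∧ ∀ t : Fin k, (M^[(m+1) + t.1 + 1] ρ) (i' t) ≠ 0) := by
      intro x i'
      rw [Fin.forall_fin_succ]
      apply and_congr
      · simp
      · apply forall_congr'
        intro t
        simp only [Fin.cons_succ, Fin.val_succ]
        rw [show m + (t.1 + 1) + 1 = m + 1 + t.1 + 1 by omega]
    calc
      ∑ i ∈ Finset.univ.filter
          (fun i : Fin (k+1) → Λ => ∀ t : Fin (k+1), (M^[m + t.1 + 1] ρ) (i t) ≠ 0),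
        (A * ((pathOp B (Fin.cons j i))ᴴ * pathOp B (Fin.cons j i))).trace
        = ∑ i : Fin (k+1) → Λ, if (∀ t : Fin (k+1), (M^[m + t.1 + 1] ρ) (i t) ≠ 0)
            then (A * ((pathOp B (Fin.cons j i))ᴴ * pathOp B (Fin.cons j i))).trace else 0 := by
          rw [Finset.sum_filter]
      _ = ∑ p : Λ × (Fin k → Λ),
            if (∀ t : Fin (k+1), (M^[m + t.1 + 1] ρ) ((Fin.cons p.1 p.2 : Fin (k+1) → Λ) t) ≠ 0)
            then (A * ((pathOp B (Fin.cons j (Fin.cons p.1 p.2)))ᴴ *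
              pathOp B (Fin.cons j (Fin.cons p.1 p.2)))).trace else 0 := by
          refine (Fintype.sum_equiv (Fin.consEquiv (fun _ : Fin (k+1) => Λ)) _ _ ?_).symm
          intro p
          rfl
      _ = ∑ x : Λ, ∑ i' : Fin k → Λ,
            if ((M^[m+1] ρ) x ≠ 0 ∧ ∀ t : Fin k, (M^[(m+1) + t.1 + 1] ρ) (i' t) ≠ 0)
            then ((B x j * A * (B x j)ᴴ) *
              ((pathOp B (Fin.cons x i'))ᴴ * pathOp B (Fin.cons x i'))).trace else 0 := by
          rw [Fintype.sum_prod_type]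
          refine Finset.sum_congr rfl fun x _ => Finset.sum_congr rfl fun i' _ => ?_
          rw [htrans x i']
          exact if_congr (hcond x i') rfl rfl
      _ = ∑ x : Λ, (B x j * A * (B x j)ᴴ).trace := by
          refine Finset.sum_congr rfl fun x _ => ?_
          by_cases hx : (M^[m+1] ρ) x = 0
          · simp only [hx, ne_eq, not_true_eq_false, false_and, if_false,
              Finset.sum_const_zero]
            rw [key x hx]
            simp
          · simp only [hx, ne_eq, not_false_eq_true, true_and]
            rw [← Finset.sum_filter]
            exact ih (m+1) x (B x j * A * (B x j)ᴴ)
              (hA.mul_mul_conjTranspose_same _) (hle' x)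
      _ = A.trace := by
          have : ∀ x : Λ, (B x j * A * (B x j)ᴴ).trace = ((B x j)ᴴ * B x j * A).trace := by
            intro x
            rw [Matrix.trace_mul_comm, Matrix.mul_assoc]
          simp only [this]
          rw [← Matrix.trace_sum]
          congr 1
          rw [← Finset.sum_mul, hB j, one_mul]

end Main


/-- Paper's Lemma 4.3(iii), at each finite depth `k`: restricting the path sum to the
supports of the evolved states does not change the total trace,
`Σ_{i_1 ∈ Λ(ρ^{(n+1)})} ⋯ Σ_{i_k ∈ Λ(ρ^{(n+k)})} Tr(ρ^{(n)}_j (B_π)ᴴ B_π) = Tr(ρ^{(n)}_j)`. -/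
theorem lemma4_3_iii {Λ : Type*} [Fintype Λ] {d : ℕ} (hd : 1 ≤ d)
    (B : Λ → Λ → Matrix (Fin d) (Fin d) ℂ)
    (hB : ∀ j : Λ, ∑ i : Λ, (B i j)ᴴ * B i j = 1)
    (ρ : Λ → Matrix (Fin d) (Fin d) ℂ)
    (hρ : ∀ j, (ρ j).PosSemidef)
    (htr : ∑ j, (ρ j).trace = 1)
    (M : (Λ → Matrix (Fin d) (Fin d) ℂ) → Λ → Matrix (Fin d) (Fin d) ℂ)
    (hM : ∀ σ i, M σ i = ∑ j : Λ, B i j * σ j * (B i j)ᴴ) :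
    ∀ (n : ℕ) (j : Λ), (M^[n] ρ) j ≠ 0 → ∀ (k : ℕ), 1 ≤ k →
      ∑ i ∈ Finset.univ.filter
          (fun i : Fin k → Λ => ∀ t : Fin k, (M^[n + t.1 + 1] ρ) (i t) ≠ 0),
        ((M^[n] ρ) j * ((pathOp B (Fin.cons j i))ᴴ * pathOp B (Fin.cons j i))).trace
      = ((M^[n] ρ) j).trace := by
  intro n j _ k _
  exact main_lemma B ρ M hB hρ hM k n j ((M^[n] ρ) j)
    (iter_psd B ρ M hρ hM n j) (by rw [sub_self]; exact Matrix.PosSemidef.zero)
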